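/- Let T be a general pseudo-homogeneous t-norm. Then either lim_{x↗1} T(x,x)=1 or lim_{x↗1} T(x,x)=0. -/
import Mathlib


open Set Filter Topology

def IsTnorm (T : ℝ → ℝ → ℝ) : Prop :=
  (∀ x ∈ Set.Icc (0:ℝ) 1, ∀ y ∈ Set.Icc (0:ℝ) 1, T x y ∈ Set.Icc (0:ℝ) 1) ∧
  (∀ x ∈ Set.Icc (0:ℝ) 1, ∀ y ∈ Set.Icc (0:ℝ) 1, T x y = T y x) ∧
  (∀ x ∈ Set.Icc (0:ℝ) 1, ∀ y ∈ Set.Icc (0:ℝ) 1, ∀ z ∈ Set.Icc (0:ℝ) 1,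
      T x (T y z) = T (T x y) z) ∧
  (∀ x ∈ Set.Icc (0:ℝ) 1, ∀ y ∈ Set.Icc (0:ℝ) 1, ∀ z ∈ Set.Icc (0:ℝ) 1,
      y ≤ z → T x y ≤ T x z) ∧
  (∀ x ∈ Set.Icc (0:ℝ) 1, T x 1 = x)

def IsGPH (T F : ℝ → ℝ → ℝ) : Prop :=
  ∀ lam ∈ Set.Icc (0:ℝ) 1, ∀ x ∈ Set.Icc (0:ℝ) 1, ∀ y ∈ Set.Icc (0:ℝ) 1,
    T (lam * x) (lam * y) = F lam (T x y)

noncomputable def TD : ℝ → ℝ → ℝ := fun x y => if max x y = 1 then min x y else 0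

theorem left_limit_at_one (T : ℝ → ℝ → ℝ) (hT : IsTnorm T)
    (h : ∃ F : ℝ → ℝ → ℝ, IsGPH T F) :
    Tendsto (fun x => T x x) (𝓝[<] (1:ℝ)) (𝓝 1) ∨
    Tendsto (fun x => T x x) (𝓝[<] (1:ℝ)) (𝓝 0) := by
  classical
  obtain ⟨F, hF⟩ := h
  obtain ⟨hrange, hcomm, hassoc, hmono, hone⟩ := hT
  have h01 : (0:ℝ) ∈ Set.Icc (0:ℝ) 1 := by constructor <;> norm_num
  have h11 : (1:ℝ) ∈ Set.Icc (0:ℝ) 1 := by constructor <;> norm_num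
  have hmul : ∀ a b : ℝ, a ∈ Set.Icc (0:ℝ) 1 → b ∈ Set.Icc (0:ℝ) 1 →
      a * b ∈ Set.Icc (0:ℝ) 1 := by
    intro a b ha hb
    exact ⟨mul_nonneg ha.1 hb.1, by nlinarith [ha.1, ha.2, hb.1, hb.2]⟩
  -- T a b ≤ a
  have hleft : ∀ a ∈ Set.Icc (0:ℝ) 1, ∀ b ∈ Set.Icc (0:ℝ) 1, T a b ≤ a := by
    intro a ha b hb
    calc T a b ≤ T a 1 := hmono a ha b hb 1 h11 hb.2
      _ = a := hone a ha
  -- first argument monotonicity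
  have hmono1 : ∀ a ∈ Set.Icc (0:ℝ) 1, ∀ a' ∈ Set.Icc (0:ℝ) 1, ∀ b ∈ Set.Icc (0:ℝ) 1,
      a ≤ a' → T a b ≤ T a' b := by
    intro a ha a' ha' b hb hle
    rw [hcomm a ha b hb, hcomm a' ha' b hb]
    exact hmono b hb a ha a' ha' hle
  -- key scaling equation: T(λx, λx) = T(λ·T(x,x), λ)
  have hE : ∀ lam ∈ Set.Icc (0:ℝ) 1, ∀ x ∈ Set.Icc (0:ℝ) 1,
      T (lam * x) (lam * x) = T (lam * T x x) lam := by
    intro lam hlam x hx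
    have hTxx := hrange x hx x hx
    have h1 := hF lam hlam x hx x hx
    have h2 := hF lam hlam (T x x) hTxx 1 h11
    rw [hone (T x x) hTxx, mul_one] at h2
    rw [h1, ← h2]
  set L := sSup ((fun x => T x x) '' Set.Ico (0:ℝ) 1) with hLdef
  have h0mem : (0:ℝ) ∈ Set.Ico (0:ℝ) 1 := ⟨le_refl _, one_pos⟩
  have hne : ((fun x => T x x) '' Set.Ico (0:ℝ) 1).Nonempty := ⟨T 0 0, ⟨0, h0mem, rfl⟩⟩
  have hbdd : BddAbove ((fun x => T x x) '' Set.Ico (0:ℝ) 1) := by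
    refine ⟨1, ?_⟩
    rintro v ⟨x, hx, rfl⟩
    exact (hrange x ⟨hx.1, hx.2.le⟩ x ⟨hx.1, hx.2.le⟩).2
  have hgleL : ∀ x ∈ Set.Ico (0:ℝ) 1, T x x ≤ L := fun x hx => le_csSup hbdd ⟨x, hx, rfl⟩
  have hL0 : 0 ≤ L := le_trans (hrange 0 h01 0 h01).1 (hgleL 0 h0mem)
  have hL1 : L ≤ 1 := by
    apply csSup_le hne
    rintro v ⟨x, hx, rfl⟩
    exact (hrange x ⟨hx.1, hx.2.le⟩ x ⟨hx.1, hx.2.le⟩).2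
  -- step 4 : g(u) ≤ u * L for u < 1
  have step4 : ∀ u ∈ Set.Ico (0:ℝ) 1, T u u ≤ u * L := by
    intro u hu
    by_contra hcon
    push_neg at hcon
    have hgu0 : 0 < T u u := lt_of_le_of_lt (mul_nonneg hu.1 hL0) hcon
    obtain ⟨x, hx1, hx2⟩ : ∃ x : ℝ, max u (u * L / T u u) < x ∧ x < 1 := by
      apply exists_between
      apply max_lt hu.2
      rw [div_lt_one hgu0]
      exact hcon
    have hxu : u < x := lt_of_le_of_lt (le_max_left _ _) hx1
    have hx0 : 0 < x := lt_of_le_of_lt hu.1 hxu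
    have hxI : x ∈ Set.Icc (0:ℝ) 1 := ⟨hx0.le, hx2.le⟩
    have hlamI : u / x ∈ Set.Icc (0:ℝ) 1 :=
      ⟨div_nonneg hu.1 hx0.le, by rw [div_le_one hx0]; exact hxu.le⟩
    have hEe := hE (u / x) hlamI x hxI
    rw [div_mul_cancel₀ u hx0.ne'] at hEe
    have hTxx := hrange x hxI x hxI
    have h5 : T u u ≤ u / x * T x x := by
      rw [hEe]
      exact hleft _ (hmul _ _ hlamI hTxx) _ hlamI
    have h6 : u / x * T x x ≤ u / x * L :=
      mul_le_mul_of_nonneg_left (hgleL x ⟨hx0.le, hx2⟩) hlamI.1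
    have h7 : u * L / T u u < x := lt_of_le_of_lt (le_max_right _ _) hx1
    have h8 : u * L < x * T u u := by
      rw [div_lt_iff₀ hgu0] at h7; linarith
    have h9 : T u u ≤ u / x * L := h5.trans h6
    have h10 : x * T u u ≤ u * L := by
      have := mul_le_mul_of_nonneg_left h9 hx0.le
      calc x * T u u ≤ x * (u / x * L) := this
        _ = u * L := by field_simp
    linarith
  -- chain : g(x³) ≤ g(g(x))
  have chain : ∀ x ∈ Set.Icc (0:ℝ) 1,
      T (x * (x * x)) (x * (x * x)) ≤ T (T x x) (T x x) := by
    intro x hx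
    have hTxx := hrange x hx x hx
    have hxx := hmul x x hx hx
    have hTxxx := hrange (x * x) hxx (x * x) hxx
    have e1 := hE x hx x hx
    have s5 : T (x * x) (x * x) ≤ T (T x x) x := by
      rw [e1]
      exact hmono1 (x * T x x) (hmul x (T x x) hx hTxx) (T x x) hTxx x hx
        (by nlinarith [hTxx.1, hTxx.2, hx.1, hx.2])
    have a1 := hassoc (T x x) hTxx x hx x hx
    have e2 := hE x hx (x * x) hxx
    calc T (x * (x * x)) (x * (x * x)) = T (x * T (x * x) (x * x)) x := e2
      _ ≤ T (T (x * x) (x * x)) x :=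
        hmono1 _ (hmul x _ hx hTxxx) _ hTxxx x hx
          (by nlinarith [hTxxx.1, hTxxx.2, hx.1, hx.2])
      _ ≤ T (T (T x x) x) x :=
        hmono1 _ hTxxx _ (hrange (T x x) hTxx x hx) x hx s5
      _ = T (T x x) (T x x) := a1.symm
  -- g(x³) ≤ L * L for x ∈ [0,1)
  have cube : ∀ x ∈ Set.Ico (0:ℝ) 1, T (x * (x * x)) (x * (x * x)) ≤ L * L := by
    intro x hx
    have hxI : x ∈ Set.Icc (0:ℝ) 1 := ⟨hx.1, hx.2.le⟩
    have hTxx := hrange x hxI x hxI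
    have hgx_lt : T x x < 1 := lt_of_le_of_lt (hleft x hxI x hxI) hx.2
    have hgxIco : T x x ∈ Set.Ico (0:ℝ) 1 := ⟨hTxx.1, hgx_lt⟩
    have h1 := step4 (T x x) hgxIco
    have h2 : T x x * L ≤ L * L := mul_le_mul_of_nonneg_right (hgleL x hx) hL0
    exact le_trans (chain x hxI) (le_trans h1 h2)
  -- hence g(u) ≤ L*L for all u ∈ [0,1)
  have allcube : ∀ u ∈ Set.Ico (0:ℝ) 1, T u u ≤ L * L := by
    intro u hu
    set x := u ^ ((3:ℕ) : ℝ)⁻¹ with hxdef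
    have hx0 : 0 ≤ x := Real.rpow_nonneg hu.1 _
    have hx1 : x < 1 := by
      rcases eq_or_lt_of_le hu.1 with h0 | h0
      · rw [hxdef, ← h0]
        rw [Real.zero_rpow (by norm_num)]
        norm_num
      · exact Real.rpow_lt_one hu.1 hu.2 (by norm_num)
    have hcube : x * (x * x) = u := by
      have := Real.rpow_inv_natCast_pow hu.1 (n := 3) (by norm_num)
      rw [hxdef]
      nlinarith [this]
    have := cube x ⟨hx0, hx1⟩
    rwa [hcube] at this
  have hLL : L ≤ L * L := by
    apply csSup_le hne
    rintro v ⟨u, hu, rfl⟩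
    exact allcube u hu
  -- dichotomy
  have hdich : L = 1 ∨ L = 0 := by
    rcases eq_or_lt_of_le hL0 with h0 | h0
    · exact Or.inr h0.symm
    · left
      have : 1 ≤ L := by nlinarith
      linarith
  -- the limit is L
  have htend : Tendsto (fun x => T x x) (𝓝[<] (1:ℝ)) (𝓝 L) := by
    rw [tendsto_order]
    constructor
    · intro c hc
      obtain ⟨v, ⟨u, hu, rfl⟩, hv⟩ := exists_lt_of_lt_csSup hne hc
      filter_upwards [Ioo_mem_nhdsLT_of_mem
        (show (1:ℝ) ∈ Set.Ioc u 1 from ⟨hu.2, le_refl _⟩)] with x hx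
      have huI : u ∈ Set.Icc (0:ℝ) 1 := ⟨hu.1, hu.2.le⟩
      have hxI : x ∈ Set.Icc (0:ℝ) 1 := ⟨le_trans hu.1 hx.1.le, hx.2.le⟩
      have m1 : T u u ≤ T u x := hmono u huI u huI x hxI hx.1.le
      have m2 : T u x ≤ T x x := hmono1 u huI x hxI x hxI hx.1.le
      exact lt_of_lt_of_le hv (m1.trans m2)
    · intro c hc
      filter_upwards [Ioo_mem_nhdsLT_of_mem
        (show (1:ℝ) ∈ Set.Ioc (0:ℝ) 1 from ⟨one_pos, le_refl _⟩)] with x hx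
      exact lt_of_le_of_lt (hgleL x ⟨hx.1.le, hx.2⟩) hc
  rcases hdich with h1 | h1
  · left; rwa [h1] at htend
  · right; rwa [h1] at htend
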